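/- Let 𝕄⁻¹ be Lipschitz in its arguments: ‖𝕄⁻¹(τ₁,r₁) − 𝕄⁻¹(τ₂,r₂)‖_{L^∞} ≤ L_𝕄(‖τ₁−τ₂‖_{L²} + ‖r₁−r₂‖_{L²}) (up to the product norm), and suppose each linearized mixed diffusion problem (with diffusion coefficient 𝕄⁻¹(ε(wᵢ),rᵢ)) is well-posed with parameter-independent stability constant C₂ in the weighted norms. Then the solution operator S₂ : (w,r̃) ↦ (ζ,φ) satisfies ‖S₂(w₁,r̃₁) − S₂(w₂,r̃₂)‖_{V₂×Q₂} ≤ max{1/√(2μ), √(2μ)} M^{3/2} C₂² L_𝕄 (‖φ_D‖_{1/2,Γ_D} + ‖g‖_{L²}) ‖(w₁,r̃₁) − (w₂,r̃₂)‖_{V₁×Q₁}. -/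
import Mathlib


open scoped RealInnerProductSpace

/-- Lipschitz continuity of the diffusion solution operator S₂ (Lemma 3.5).
`V₁` is the displacement space, `T` the L² tensor space of strains,
`E` the L² flux space and `Q` the L² concentration space; `A (τ,r)` is the
multiplication operator by the matrix field 𝕄⁻¹(τ,r), `D` is the divergence. -/
theorem stmt_8
    {V₁ T E Q : Type*}
    [NormedAddCommGroup V₁] [InnerProductSpace ℝ V₁] [CompleteSpace V₁]
    [NormedAddCommGroup T] [InnerProductSpace ℝ T] [CompleteSpace T]
    [NormedAddCommGroup E] [InnerProductSpace ℝ E] [CompleteSpace E]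
    [NormedAddCommGroup Q] [InnerProductSpace ℝ Q] [CompleteSpace Q]
    (μ lam M θ : ℝ) (hμ : 0 < μ) (hlam : 1 ≤ lam) (hM : 1 ≤ M) (hθ : 0 < θ)
    (eps : V₁ →ₗ[ℝ] T) (D : E →ₗ[ℝ] Q)
    (A : T × Q → E →L[ℝ] E)
    -- Lipschitz continuity of 𝕄⁻¹ (L∞ norm ↔ operator norm, product L² norm)
    (L𝕄 : ℝ) (hL𝕄 : 0 ≤ L𝕄)
    (hALip : ∀ s t : T × Q,
      ‖A s - A t‖ ≤ L𝕄 * Real.sqrt (‖s.1 - t.1‖ ^ 2 + ‖s.2 - t.2‖ ^ 2))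
    -- weighted norms
    (Vn : E → ℝ) (hVn : ∀ ξ, ‖ξ‖ ≤ Real.sqrt M * Vn ξ)
    (Q₂n : Q → ℝ) (hQ₂n : ∀ ψ, Q₂n ψ = Real.sqrt ((1 / M) * ‖ψ‖ ^ 2 + θ * ‖ψ‖ ^ 2))
    (V₁n : V₁ → ℝ) (hV₁n : ∀ w, V₁n w = Real.sqrt (2 * μ) * ‖eps w‖)
    (Q₁n : Q → ℝ)
    (hQ₁n : ∀ r, Q₁n r = Real.sqrt ((1 / (2 * μ)) * ‖r‖ ^ 2 + (1 / lam) * ‖r‖ ^ 2))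
    -- data of the mixed diffusion problem
    (F₂ : E → ℝ) (G₂ : Q → ℝ)
    (φD g : ℝ) (hφD : 0 ≤ φD) (hg : 0 ≤ g)
    -- the solution operator S₂ : (w, r̃) ↦ (ζ, φ)
    (S₂ : V₁ × Q → E × Q)
    (hsol : ∀ p : V₁ × Q,
      (∀ ξ, ⟪A (eps p.1, p.2) (S₂ p).1, ξ⟫ + ⟪D ξ, (S₂ p).2⟫ = F₂ ξ) ∧
      (∀ ψ, ⟪D (S₂ p).1, ψ⟫ - θ * ⟪(S₂ p).2, ψ⟫ = G₂ ψ))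
    -- parameter-independent well-posedness with stability constant C₂
    (C₂ : ℝ) (hC₂ : 0 < C₂)
    (hstab : ∀ (s : T × Q) (ζ : E) (φ : Q) (F : E → ℝ) (NF : ℝ),
      (∀ ξ, ⟪A s ζ, ξ⟫ + ⟪D ξ, φ⟫ = F ξ) →
      (∀ ψ, ⟪D ζ, ψ⟫ - θ * ⟪φ, ψ⟫ = 0) →
      (∀ ξ, |F ξ| ≤ NF * Vn ξ) →
      Real.sqrt ((Vn ζ) ^ 2 + (Q₂n φ) ^ 2) ≤ C₂ * NF)
    -- a priori bound for solutions in terms of the data ‖φ_D‖_{1/2,Γ_D} and ‖g‖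
    (hapriori : ∀ p : V₁ × Q,
      Real.sqrt ((Vn (S₂ p).1) ^ 2 + (Q₂n (S₂ p).2) ^ 2) ≤ C₂ * (φD + g)) :
    ∀ p q : V₁ × Q,
      Real.sqrt ((Vn ((S₂ p).1 - (S₂ q).1)) ^ 2 + (Q₂n ((S₂ p).2 - (S₂ q).2)) ^ 2) ≤
        max (1 / Real.sqrt (2 * μ)) (Real.sqrt (2 * μ)) * Real.sqrt (M ^ 3) *
          C₂ ^ 2 * L𝕄 * (φD + g) *
          Real.sqrt ((V₁n (p.1 - q.1)) ^ 2 + (Q₁n (p.2 - q.2)) ^ 2) := by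
  intro p q
  obtain ⟨h1p, h2p⟩ := hsol p
  obtain ⟨h1q, h2q⟩ := hsol q
  set s : T × Q := (eps p.1, p.2) with hs
  set t : T × Q := (eps q.1, q.2) with ht
  set ζ₁ := (S₂ p).1
  set φ₁ := (S₂ p).2
  set ζ₂ := (S₂ q).1
  set φ₂ := (S₂ q).2
  set a : ℝ := ‖eps (p.1 - q.1)‖ with ha
  set b : ℝ := ‖p.2 - q.2‖ with hb
  set δ : ℝ := Real.sqrt (a ^ 2 + b ^ 2) with hδdef
  have hδ0 : 0 ≤ δ := Real.sqrt_nonneg _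
  have hM0 : (0:ℝ) < M := lt_of_lt_of_le one_pos hM
  have hsqM1 : (1:ℝ) ≤ Real.sqrt M := by
    rw [show (1:ℝ) = Real.sqrt 1 by simp]
    exact Real.sqrt_le_sqrt hM
  have hVnpos : ∀ ξ : E, 0 ≤ Vn ξ := by
    intro ξ
    by_contra h
    push_neg at h
    have h1 : Real.sqrt M * Vn ξ < 0 :=
      mul_neg_of_pos_of_neg (lt_of_lt_of_le one_pos hsqM1) h
    exact absurd (lt_of_le_of_lt (hVn ξ) h1) (norm_nonneg ξ).not_gt
  -- a priori bound on ζ₂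
  have hζ₂ : ‖ζ₂‖ ≤ Real.sqrt M * (C₂ * (φD + g)) := by
    have h1 : Vn ζ₂ ≤ C₂ * (φD + g) := by
      have h2 := hapriori q
      have h3 : Vn ζ₂ ≤ Real.sqrt ((Vn ζ₂) ^ 2 + (Q₂n φ₂) ^ 2) :=
        calc Vn ζ₂ = Real.sqrt ((Vn ζ₂) ^ 2) := (Real.sqrt_sq (hVnpos ζ₂)).symm
          _ ≤ Real.sqrt ((Vn ζ₂) ^ 2 + (Q₂n φ₂) ^ 2) :=
            Real.sqrt_le_sqrt (by linarith [sq_nonneg (Q₂n φ₂)])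
      linarith
    calc ‖ζ₂‖ ≤ Real.sqrt M * Vn ζ₂ := hVn ζ₂
      _ ≤ Real.sqrt M * (C₂ * (φD + g)) :=
          mul_le_mul_of_nonneg_left h1 (Real.sqrt_nonneg M)
  set NF : ℝ := L𝕄 * (M * C₂ * (φD + g)) * δ with hNF
  -- operator difference bound
  have hAd : ‖A t - A s‖ ≤ L𝕄 * δ := by
    have h := hALip t s
    have e1 : ‖t.1 - s.1‖ = a := by
      simp only [hs, ht, ha, map_sub]
      exact norm_sub_rev _ _
    have e2 : ‖t.2 - s.2‖ = b := by
      simp only [hs, ht, hb]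
      exact norm_sub_rev _ _
    rwa [e1, e2] at h
  -- stability estimate applied to the difference of solutions
  have hmain : Real.sqrt ((Vn (ζ₁ - ζ₂)) ^ 2 + (Q₂n (φ₁ - φ₂)) ^ 2) ≤ C₂ * NF := by
    apply hstab s (ζ₁ - ζ₂) (φ₁ - φ₂) (fun ξ => ⟪(A t - A s) ζ₂, ξ⟫)
    · intro ξ
      have e1 := h1p ξ
      have e2 := h1q ξ
      simp only [map_sub, inner_sub_left, inner_sub_right,
        ContinuousLinearMap.sub_apply] at e1 e2 ⊢
      linarith
    · intro ψ
      have e1 := h2p ψ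
      have e2 := h2q ψ
      simp only [map_sub, inner_sub_left, inner_sub_right] at e1 e2 ⊢
      linear_combination e1 - e2
    · intro ξ
      have h1 : |⟪(A t - A s) ζ₂, ξ⟫| ≤ ‖A t - A s‖ * ‖ζ₂‖ * ‖ξ‖ := by
        calc |⟪(A t - A s) ζ₂, ξ⟫| ≤ ‖(A t - A s) ζ₂‖ * ‖ξ‖ :=
              abs_real_inner_le_norm _ _
          _ ≤ ‖A t - A s‖ * ‖ζ₂‖ * ‖ξ‖ :=
              mul_le_mul_of_nonneg_right ((A t - A s).le_opNorm ζ₂) (norm_nonneg ξ)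
      have h2 : ‖A t - A s‖ * ‖ζ₂‖ * ‖ξ‖ ≤
          (L𝕄 * δ) * (Real.sqrt M * (C₂ * (φD + g))) * (Real.sqrt M * Vn ξ) := by
        have n1 : ‖A t - A s‖ * ‖ζ₂‖ ≤ (L𝕄 * δ) * (Real.sqrt M * (C₂ * (φD + g))) :=
          mul_le_mul hAd hζ₂ (norm_nonneg _) (by positivity)
        exact mul_le_mul n1 (hVn ξ) (norm_nonneg _) (by positivity)
      have h3 : (L𝕄 * δ) * (Real.sqrt M * (C₂ * (φD + g))) * (Real.sqrt M * Vn ξ)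
          = NF * Vn ξ := by
        have hMM : Real.sqrt M * Real.sqrt M = M := Real.mul_self_sqrt hM0.le
        rw [hNF]
        linear_combination (L𝕄 * δ * (C₂ * (φD + g)) * Vn ξ) * hMM
      linarith
  -- unweighting the norms
  set m : ℝ := max (1 / Real.sqrt (2 * μ)) (Real.sqrt (2 * μ)) with hm
  set W : ℝ := Real.sqrt ((V₁n (p.1 - q.1)) ^ 2 + (Q₁n (p.2 - q.2)) ^ 2) with hW
  have hW0 : 0 ≤ W := Real.sqrt_nonneg _
  have h2μ : (0:ℝ) < 2 * μ := by linarith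
  have hsq2μ : (0:ℝ) < Real.sqrt (2 * μ) := Real.sqrt_pos.mpr h2μ
  have hm0 : 0 < m := lt_of_lt_of_le hsq2μ (le_max_right _ _)
  have hsq2μ2 : Real.sqrt (2 * μ) ^ 2 = 2 * μ := Real.sq_sqrt h2μ.le
  have hm1 : 1 ≤ m ^ 2 * (2 * μ) := by
    have h1 : 1 / Real.sqrt (2 * μ) ≤ m := le_max_left _ _
    have h4 : 1 ≤ m * Real.sqrt (2 * μ) := by
      rw [div_le_iff₀ hsq2μ] at h1
      linarith
    have h5 : (1:ℝ) * 1 ≤ (m * Real.sqrt (2 * μ)) * (m * Real.sqrt (2 * μ)) :=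
      mul_le_mul h4 h4 zero_le_one (le_trans zero_le_one h4)
    calc (1:ℝ) = 1 * 1 := (one_mul 1).symm
      _ ≤ (m * Real.sqrt (2 * μ)) * (m * Real.sqrt (2 * μ)) := h5
      _ = m ^ 2 * Real.sqrt (2 * μ) ^ 2 := by ring
      _ = m ^ 2 * (2 * μ) := by rw [hsq2μ2]
  have hm2 : 2 * μ ≤ m ^ 2 := by
    have h1 : Real.sqrt (2 * μ) ≤ m := le_max_right _ _
    calc 2 * μ = Real.sqrt (2 * μ) ^ 2 := hsq2μ2.symm
      _ ≤ m ^ 2 := pow_le_pow_left₀ hsq2μ.le h1 2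
  have hW2 : (V₁n (p.1 - q.1)) ^ 2 + (Q₁n (p.2 - q.2)) ^ 2
      = 2 * μ * a ^ 2 + ((1 / (2 * μ)) * b ^ 2 + (1 / lam) * b ^ 2) := by
    have hlam0 : (0:ℝ) < lam := lt_of_lt_of_le one_pos hlam
    have e1 : V₁n (p.1 - q.1) ^ 2 = 2 * μ * a ^ 2 := by
      rw [hV₁n, mul_pow, hsq2μ2, ← ha]
    have e2 : Q₁n (p.2 - q.2) ^ 2 = (1 / (2 * μ)) * b ^ 2 + (1 / lam) * b ^ 2 := by
      rw [hQ₁n, Real.sq_sqrt (by positivity), ← hb]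
    rw [e1, e2]
  have hδle : δ ≤ m * W := by
    have h1 : a ^ 2 + b ^ 2 ≤
        m ^ 2 * ((V₁n (p.1 - q.1)) ^ 2 + (Q₁n (p.2 - q.2)) ^ 2) := by
      rw [hW2]
      have hlam0 : (0:ℝ) < lam := lt_of_lt_of_le one_pos hlam
      have h2 : a ^ 2 ≤ m ^ 2 * (2 * μ * a ^ 2) :=
        calc a ^ 2 = 1 * a ^ 2 := (one_mul _).symm
          _ ≤ m ^ 2 * (2 * μ) * a ^ 2 :=
              mul_le_mul_of_nonneg_right hm1 (sq_nonneg a)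
          _ = m ^ 2 * (2 * μ * a ^ 2) := by ring
      have key : 1 ≤ m ^ 2 * (1 / (2 * μ)) := by
        rw [mul_one_div, le_div_iff₀ h2μ, one_mul]
        exact hm2
      have h3 : b ^ 2 ≤ m ^ 2 * ((1 / (2 * μ)) * b ^ 2) :=
        calc b ^ 2 = 1 * b ^ 2 := (one_mul _).symm
          _ ≤ m ^ 2 * (1 / (2 * μ)) * b ^ 2 :=
              mul_le_mul_of_nonneg_right key (sq_nonneg b)
          _ = m ^ 2 * ((1 / (2 * μ)) * b ^ 2) := by ring
      have h4 : (0:ℝ) ≤ m ^ 2 * ((1 / lam) * b ^ 2) := by positivity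
      have expand : m ^ 2 * (2 * μ * a ^ 2 + ((1 / (2 * μ)) * b ^ 2 + (1 / lam) * b ^ 2))
          = m ^ 2 * (2 * μ * a ^ 2) + (m ^ 2 * ((1 / (2 * μ)) * b ^ 2)
            + m ^ 2 * ((1 / lam) * b ^ 2)) := by ring
      rw [expand]
      linarith
    calc δ ≤ Real.sqrt (m ^ 2 * ((V₁n (p.1 - q.1)) ^ 2 + (Q₁n (p.2 - q.2)) ^ 2)) :=
          Real.sqrt_le_sqrt h1
      _ = m * W := by
          rw [Real.sqrt_mul (sq_nonneg m), Real.sqrt_sq hm0.le, hW]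
  have hM32 : Real.sqrt (M ^ 3) = M * Real.sqrt M := by
    rw [pow_succ, Real.sqrt_mul (by positivity), Real.sqrt_sq hM0.le]
  -- conclusion
  calc Real.sqrt ((Vn (ζ₁ - ζ₂)) ^ 2 + (Q₂n (φ₁ - φ₂)) ^ 2) ≤ C₂ * NF := hmain
    _ = C₂ ^ 2 * L𝕄 * (φD + g) * (M * δ) := by rw [hNF]; ring
    _ ≤ C₂ ^ 2 * L𝕄 * (φD + g) * ((M * Real.sqrt M) * (m * W)) := by
        apply mul_le_mul_of_nonneg_left _ (by positivity)
        have h1 : M * δ ≤ M * (m * W) :=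
          mul_le_mul_of_nonneg_left hδle hM0.le
        have hMle : M ≤ M * Real.sqrt M :=
          calc M = M * 1 := (mul_one M).symm
            _ ≤ M * Real.sqrt M := mul_le_mul_of_nonneg_left hsqM1 hM0.le
        have h2 : M * (m * W) ≤ (M * Real.sqrt M) * (m * W) :=
          mul_le_mul_of_nonneg_right hMle (mul_nonneg hm0.le hW0)
        linarith
    _ = m * (M * Real.sqrt M) * C₂ ^ 2 * L𝕄 * (φD + g) * W := by ring
    _ = m * Real.sqrt (M ^ 3) * C₂ ^ 2 * L𝕄 * (φD + g) * W := by rw [hM32]
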